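/- Strict negativity at a positive interior maximum (the key comparison step in the uniqueness proof): let h : E × [0,∞) → ℝ be such that h(·,τ) ∈ C₀(E) for every τ ≥ 0 and h(·,0) ≡ 0, and suppose (x⋆,t⋆) ∈ E × (0,∞) satisfies h(x⋆,t⋆) ≥ h(x,t) for all (x,t) ∈ E × [0,t⋆] and h(x⋆,t⋆) > 0. If the function s ↦ (P_s h(·,(t⋆−s)∨0))(x⋆) − h(x⋆,t⋆) is ν-integrable on (0,∞), then ∫₀^∞ ((P_s h(·,(t⋆−s)∨0))(x⋆) − h(x⋆,t⋆)) ν(ds) ≤ −h(x⋆,t⋆)·ν([t⋆,∞)) < 0. -/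

import Mathlib

open MeasureTheory Set Filter Topology
open scoped ZeroAtInfty


/-- Positive part of a `C₀` function. -/
noncomputable def posPartC0 {E : Type*} [TopologicalSpace E] (f : C₀(E, ℝ)) : C₀(E, ℝ) :=
  { toFun := fun x => max (f x) 0
    continuous_toFun := (map_continuous f).max continuous_const
    zero_at_infty' := by
      simpa using (zero_at_infty f).max
        (tendsto_const_nhds : Tendsto (fun _ : E => (0:ℝ)) (cocompact E) (𝓝 0)) }

lemma posPart_apply {E : Type*} [TopologicalSpace E] (f : C₀(E, ℝ)) (x : E) :
    posPartC0 f x = max (f x) 0 := rfl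

lemma norm_posPart_le {E : Type*} [TopologicalSpace E] (f : C₀(E, ℝ)) {M : ℝ} (hM : 0 ≤ M)
    (hf : ∀ x, f x ≤ M) : ‖posPartC0 f‖ ≤ M := by
  rw [← ZeroAtInftyContinuousMap.norm_toBCF_eq_norm]
  refine BoundedContinuousFunction.norm_le hM |>.mpr fun x => ?_
  have : |max (f x) 0| = max (f x) 0 := abs_of_nonneg (le_max_right _ _)
  simpa [posPart_apply, Real.norm_eq_abs, this] using max_le (hf x) hM

/-- Strict negativity of the coupled space-time nonlocal operator at a positive interior
maximum: if `h(·,0) ≡ 0`, `(xstar,tstar)` is a maximum over `E × [0,tstar]` with `h(xstar,tstar) > 0`,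
then `∫₀^∞ ((P_s h(·,(tstar-s)∨0))(xstar) - h(xstar,tstar)) ν(ds) ≤ -h(xstar,tstar)·ν([tstar,∞)) < 0`. -/
theorem ctrw_overshoot_positive_maximum
    {E : Type*} [MetricSpace E] [TopologicalSpace.SeparableSpace E] [LocallyCompactSpace E]
    (P : ℝ → C₀(E, ℝ) →L[ℝ] C₀(E, ℝ))
    (hP0 : P 0 = ContinuousLinearMap.id ℝ C₀(E, ℝ))
    (hPsg : ∀ s t : ℝ, 0 ≤ s → 0 ≤ t → P (s + t) = (P s).comp (P t))
    (hPpos : ∀ t : ℝ, 0 ≤ t → ∀ f : C₀(E, ℝ), (∀ x, 0 ≤ f x) → ∀ x, 0 ≤ P t f x)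
    (hPcon : ∀ t : ℝ, 0 ≤ t → ∀ f : C₀(E, ℝ), ‖P t f‖ ≤ ‖f‖)
    (hPsc : ∀ f : C₀(E, ℝ), Tendsto (fun t => P t f) (𝓝[≥] (0 : ℝ)) (𝓝 f))
    (ν : Measure ℝ)
    (hν1 : ∫⁻ s in Set.Ioi (0 : ℝ), ENNReal.ofReal (min 1 s) ∂ν ≠ ⊤)
    (hνpos : ∀ t : ℝ, 0 < t → 0 < ν (Set.Ioi t))
    (h : ℝ → C₀(E, ℝ)) (hh0 : h 0 = 0)
    (xstar : E) (tstar : ℝ) (htstar : 0 < tstar)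
    (hmax : ∀ (x : E) (t : ℝ), 0 ≤ t → t ≤ tstar → (h t) x ≤ (h tstar) xstar)
    (hpos : 0 < (h tstar) xstar)
    (hint : IntegrableOn
      (fun s : ℝ => (P s (h (max (tstar - s) 0))) xstar - (h tstar) xstar) (Set.Ioi 0) ν) :
    (∫ s in Set.Ioi (0 : ℝ), ((P s (h (max (tstar - s) 0))) xstar - (h tstar) xstar) ∂ν
        ≤ -((h tstar) xstar) * (ν (Set.Ici tstar)).toReal) ∧
    -((h tstar) xstar) * (ν (Set.Ici tstar)).toReal < 0 := by
  set M := (h tstar) xstar with hM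
  -- ν (Ici tstar) is finite
  have hsub : Set.Ici tstar ⊆ Set.Ioi (0 : ℝ) := fun s hs => lt_of_lt_of_le htstar hs
  have hfin : ν (Set.Ici tstar) ≠ ⊤ := by
    set c : ℝ := min 1 tstar with hc
    have hcpos : 0 < c := lt_min one_pos htstar
    have key : ENNReal.ofReal c * ν (Set.Ici tstar)
        ≤ ∫⁻ s in Set.Ioi (0 : ℝ), ENNReal.ofReal (min 1 s) ∂ν := by
      calc ENNReal.ofReal c * ν (Set.Ici tstar)
          = ∫⁻ _ in Set.Ici tstar, ENNReal.ofReal c ∂ν := by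
            rw [setLIntegral_const, mul_comm]
        _ ≤ ∫⁻ s in Set.Ici tstar, ENNReal.ofReal (min 1 s) ∂ν := by
            refine setLIntegral_mono' measurableSet_Ici fun s hs => ?_
            exact ENNReal.ofReal_le_ofReal (min_le_min le_rfl hs)
        _ ≤ ∫⁻ s in Set.Ioi (0:ℝ), ENNReal.ofReal (min 1 s) ∂ν :=
            lintegral_mono_set hsub
    intro htop
    rw [htop, ENNReal.mul_top (by simp [ENNReal.ofReal_eq_zero, not_le, hcpos]),
      top_le_iff] at key
    exact hν1 key
  -- pointwise bound by the indicator function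
  have hbound : ∀ s ∈ Set.Ioi (0 : ℝ),
      (P s (h (max (tstar - s) 0))) xstar - M
        ≤ Set.indicator (Set.Ici tstar) (fun _ => -M) s := by
    intro s hs
    have hs0 : (0:ℝ) ≤ s := le_of_lt hs
    by_cases hst : tstar ≤ s
    · have : max (tstar - s) 0 = 0 := max_eq_right (by linarith)
      rw [this, hh0, Set.indicator_of_mem (show s ∈ Set.Ici tstar from hst)]
      simp
    · push_neg at hst
      rw [Set.indicator_of_notMem (by simpa using hst)]
      have hmt : max (tstar - s) 0 = tstar - s := max_eq_left (by linarith)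
      set f := h (max (tstar - s) 0) with hf
      have hfle : ∀ x, f x ≤ M := by
        intro x
        rw [hf, hmt]
        exact hmax x (tstar - s) (by linarith) (by linarith)
      have h1 : ∀ x, (P s f) x ≤ (P s (posPartC0 f)) x := by
        intro x
        have := hPpos s hs0 (posPartC0 f - f)
          (fun y => by simpa [posPart_apply] using sub_nonneg.mpr (le_max_left (f y) 0)) x
        have hmap : (P s (posPartC0 f - f)) x = (P s (posPartC0 f)) x - (P s f) x := by
          rw [map_sub]; rfl
        linarith [hmap ▸ this]
      have h2 : (P s (posPartC0 f)) xstar ≤ M := by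
        have hn : ‖P s (posPartC0 f)‖ ≤ M :=
          le_trans (hPcon s hs0 _) (norm_posPart_le f hpos.le hfle)
        calc (P s (posPartC0 f)) xstar ≤ |(P s (posPartC0 f)) xstar| := le_abs_self _
          _ ≤ ‖P s (posPartC0 f)‖ := by
              rw [← ZeroAtInftyContinuousMap.norm_toBCF_eq_norm]
              exact (P s (posPartC0 f)).toBCF.norm_coe_le_norm xstar
          _ ≤ M := hn
      linarith [h1 xstar]
  -- integrability of the indicator
  have hgint : IntegrableOn (Set.indicator (Set.Ici tstar) (fun _ => -M)) (Set.Ioi 0) ν := by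
    exact ((integrable_indicator_iff measurableSet_Ici).mpr
      (integrableOn_const hfin)).integrableOn
  constructor
  · calc ∫ s in Set.Ioi (0:ℝ), ((P s (h (max (tstar - s) 0))) xstar - M) ∂ν
        ≤ ∫ s in Set.Ioi (0:ℝ), Set.indicator (Set.Ici tstar) (fun _ => -M) s ∂ν :=
          setIntegral_mono_on hint hgint measurableSet_Ioi hbound
      _ = ∫ s in Set.Ioi (0:ℝ) ∩ Set.Ici tstar, (-M) ∂ν :=
          setIntegral_indicator measurableSet_Ici
      _ = -M * (ν (Set.Ici tstar)).toReal := by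
          rw [Set.inter_eq_right.mpr hsub, setIntegral_const, smul_eq_mul, mul_comm, measureReal_def]
  · have hνI : 0 < ν (Set.Ici tstar) :=
      lt_of_lt_of_le (hνpos tstar htstar) (measure_mono Set.Ioi_subset_Ici_self)
    have : 0 < (ν (Set.Ici tstar)).toReal := ENNReal.toReal_pos hνI.ne' hfin
    nlinarith
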